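/- arXiv:2209.11012 — 3 statements merged into one kernel-verified Lean document; each statement's English description precedes it below -/
import Mathlib

section
/- Suppose the positive-weight quadrature rule {(w_j, x_j)}_{j=1}^m on S^d satisfies the Marcinkiewicz–Zygmund property with constant η ∈ [0,1) for degree n. Then for every χ ∈ P_n(S^d), (1−η)‖χ‖_{L²} ≤ ‖U_n χ‖_{L²} ≤ (1+η)‖χ‖_{L²}. -/
open MeasureTheory

noncomputable section

/-- `Z(d,ℓ) = (2ℓ+d−1)·Γ(ℓ+d−1)/(Γ(d)·Γ(ℓ+1))`, the number of linearly independent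
real spherical harmonics of exact degree `ℓ` on `S^d`. -/
def Zdim (d ℓ : ℕ) : ℕ :=
  (2 * ℓ + d - 1) * Nat.factorial (ℓ + d - 2) / (Nat.factorial (d - 1) * Nat.factorial ℓ)

/-- The unit sphere `S^d = {x ∈ ℝ^{d+1} : ‖x‖₂ = 1}`. -/
abbrev Sph (d : ℕ) : Type :=
  Metric.sphere (0 : EuclideanSpace ℝ (Fin (d + 1))) 1

/-- The surface measure `ω_d` on `S^d`: the `d`-dimensional Hausdorff measure. -/
def sphMeasure (d : ℕ) : Measure (Sph d) :=
  MeasureTheory.Measure.hausdorffMeasure (d : ℝ)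

/-- The surface area `|S^d| = ∫_{S^d} dω_d`. -/
def surfArea (d : ℕ) : ℝ := (sphMeasure d Set.univ).toReal

/-- `Y : S^d → ℝ` is a spherical harmonic of degree `ℓ`: the restriction to the sphere
of a harmonic polynomial on `ℝ^{d+1}` which is homogeneous of degree `ℓ`. -/
def IsSphericalHarmonic (d ℓ : ℕ) (Y : Sph d → ℝ) : Prop :=
  ∃ p : MvPolynomial (Fin (d + 1)) ℝ,
    p.IsHomogeneous ℓ ∧
    (∑ i, MvPolynomial.pderiv i (MvPolynomial.pderiv i p)) = 0 ∧
    ∀ x : Sph d, Y x = MvPolynomial.eval (fun i => (x : EuclideanSpace ℝ (Fin (d + 1))) i) p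

/-- A complete `L²(ω_d)`-orthonormal system `{Y_{ℓ,k} : k = 1,…,Z(d,ℓ); ℓ = 0,1,2,…}`
of real spherical harmonics on `S^d`. -/
structure SHSetup (d : ℕ) where
  Y : (ℓ : ℕ) → Fin (Zdim d ℓ) → Sph d → ℝ
  harmonic : ∀ ℓ k, IsSphericalHarmonic d ℓ (Y ℓ k)
  orthonormal : ∀ (ℓ ℓ' : ℕ) (k : Fin (Zdim d ℓ)) (k' : Fin (Zdim d ℓ')),
    ∫ x, Y ℓ k x * Y ℓ' k' x ∂(sphMeasure d) =
      if ℓ = ℓ' ∧ (k : ℕ) = (k' : ℕ) then 1 else 0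
  complete : ∀ f : Sph d → ℝ, MemLp f 2 (sphMeasure d) →
    (∀ ℓ k, ∫ x, f x * Y ℓ k x ∂(sphMeasure d) = 0) → f =ᵐ[sphMeasure d] 0

variable {d : ℕ}

/-- Laplace–Fourier coefficient `f̂_{ℓ,k} = ∫_{S^d} f·Y_{ℓ,k} dω_d`. -/
def coef (S : SHSetup d) (f : Sph d → ℝ) (ℓ : ℕ) (k : Fin (Zdim d ℓ)) : ℝ :=
  ∫ x, f x * S.Y ℓ k x ∂(sphMeasure d)

/-- Membership in `P_n(S^d) = span{Y_{ℓ,k} : ℓ ≤ n}`. -/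
def inPn (S : SHSetup d) (n : ℕ) (χ : Sph d → ℝ) : Prop :=
  ∃ c : (ℓ : ℕ) → Fin (Zdim d ℓ) → ℝ,
    χ = fun x => ∑ ℓ ∈ Finset.range (n + 1), ∑ k, c ℓ k * S.Y ℓ k x

/-- `⟨f,g⟩ = ∫_{S^d} f g dω_d`. -/
def innerL2 (d : ℕ) (f g : Sph d → ℝ) : ℝ := ∫ x, f x * g x ∂(sphMeasure d)

/-- `‖f‖²_{L²}`. -/
def l2NormSq (d : ℕ) (f : Sph d → ℝ) : ℝ := ∫ x, f x ^ 2 ∂(sphMeasure d)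

/-- `‖f‖_{L²}`. -/
def l2Norm (d : ℕ) (f : Sph d → ℝ) : ℝ := Real.sqrt (l2NormSq d f)

/-- `‖f‖_∞ = sup_{x ∈ S^d} |f(x)|`. -/
def supNorm (d : ℕ) (f : Sph d → ℝ) : ℝ := ⨆ x : Sph d, |f x|

/-- The (unfettered) hyperinterpolant
`U_n f = Σ_{ℓ=0}^n Σ_{k} ⟨f, Y_{ℓ,k}⟩_m Y_{ℓ,k}`, where
`⟨f,g⟩_m = Σ_{j=1}^m w_j f(x_j) g(x_j)`. -/
def hyper (S : SHSetup d) (n m : ℕ) (w : Fin m → ℝ) (pts : Fin m → Sph d)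
    (f : Sph d → ℝ) : Sph d → ℝ := fun x =>
  ∑ ℓ ∈ Finset.range (n + 1), ∑ k,
    (∑ j, w j * f (pts j) * S.Y ℓ k (pts j)) * S.Y ℓ k x

/-- Marcinkiewicz–Zygmund property with constant `η` for degree `n`:
`|Σ_j w_j χ(x_j)² − ∫ χ² dω_d| ≤ η ∫ χ² dω_d` for all `χ ∈ P_n(S^d)`. -/
def MZProperty (S : SHSetup d) (n m : ℕ) (w : Fin m → ℝ) (pts : Fin m → Sph d)
    (η : ℝ) : Prop :=
  ∀ χ : Sph d → ℝ, inPn S n χ →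
    |∑ j, w j * χ (pts j) ^ 2 - ∫ x, χ x ^ 2 ∂(sphMeasure d)| ≤
      η * ∫ x, χ x ^ 2 ∂(sphMeasure d)

/-- `E_n(f) = inf_{χ ∈ P_n} ‖f − χ‖_∞`, the best uniform approximation error. -/
def bestUnifErr (S : SHSetup d) (n : ℕ) (f : Sph d → ℝ) : ℝ :=
  sInf {e : ℝ | ∃ χ : Sph d → ℝ, inPn S n χ ∧ e = supNorm d fun x => f x - χ x}

/-- `‖f‖²_{H^s} = Σ_ℓ Σ_k (a_ℓ)⁻¹ |f̂_{ℓ,k}|²`. -/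
def sobNormSq (S : SHSetup d) (a : ℕ → ℝ) (f : Sph d → ℝ) : ℝ :=
  ∑' ℓ : ℕ, ∑ k, (a ℓ)⁻¹ * coef S f ℓ k ^ 2

/-- The Sobolev norm `‖f‖_{H^s}` associated with the normalizing sequence `a`. -/
def sobNorm (S : SHSetup d) (a : ℕ → ℝ) (f : Sph d → ℝ) : ℝ :=
  Real.sqrt (sobNormSq S a f)

/-- Membership in the Sobolev space `H^s(S^d)` (w.r.t. the normalizing sequence `a`). -/
def memHs (S : SHSetup d) (a : ℕ → ℝ) (f : Sph d → ℝ) : Prop :=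
  MemLp f 2 (sphMeasure d) ∧ Summable fun ℓ : ℕ => ∑ k, (a ℓ)⁻¹ * coef S f ℓ k ^ 2

/-- The sequence `a` is a valid normalizing sequence for `H^s`: positive and
`a_ℓ ≍ (1+ℓ)^{−2s}`. -/
def IsNormSeq (s : ℝ) (a : ℕ → ℝ) : Prop :=
  (∀ ℓ, 0 < a ℓ) ∧ ∃ c₁ c₂ : ℝ, 0 < c₁ ∧ 0 < c₂ ∧ ∀ ℓ : ℕ,
    c₁ * (1 + (ℓ : ℝ)) ^ (-(2 * s)) ≤ a ℓ ∧ a ℓ ≤ c₂ * (1 + (ℓ : ℝ)) ^ (-(2 * s))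

/-- `x_1,…,x_m` is a QMC design for `H^s(S^d)` with constant `c`:
`|(1/m) Σ_j f(x_j) − ∫ f dω_d| ≤ c·m^{−s/d}·‖f‖_{H^s}` for all `f ∈ H^s(S^d)`. -/
def IsQMCDesign (S : SHSetup d) (s : ℝ) (a : ℕ → ℝ) (m : ℕ)
    (pts : Fin m → Sph d) (c : ℝ) : Prop :=
  ∀ f : Sph d → ℝ, Continuous f → memHs S a f →
    |(1 / (m : ℝ)) * ∑ j, f (pts j) - ∫ x, f x ∂(sphMeasure d)| ≤
      c * (m : ℝ) ^ (-(s / (d : ℝ))) * sobNorm S a f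

/-- The `L²`-orthogonal projection `P_n f = Σ_{ℓ=0}^n Σ_k ⟨f,Y_{ℓ,k}⟩ Y_{ℓ,k}`. -/
def projL2 (S : SHSetup d) (n : ℕ) (f : Sph d → ℝ) : Sph d → ℝ := fun x =>
  ∑ ℓ ∈ Finset.range (n + 1), ∑ k, coef S f ℓ k * S.Y ℓ k x

/-- `E_n(f; H^s) = inf_{χ ∈ P_n} ‖f − χ‖_{H^s}`. -/
def bestHsErr (S : SHSetup d) (a : ℕ → ℝ) (n : ℕ) (f : Sph d → ℝ) : ℝ :=
  sInf {e : ℝ | ∃ χ : Sph d → ℝ, inPn S n χ ∧ e = sobNorm S a fun x => f x - χ x}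


section AuxStatement3

variable {d : ℕ}

private lemma sph_contY (S : SHSetup d) (ℓ : ℕ) (k : Fin (Zdim d ℓ)) :
    Continuous (S.Y ℓ k) := by
  obtain ⟨p, -, -, hp⟩ := S.harmonic ℓ k
  have h : S.Y ℓ k = fun x : Sph d =>
      MvPolynomial.eval (fun i => (x : EuclideanSpace ℝ (Fin (d + 1))) i) p := funext hp
  rw [h]
  have h1 : Continuous fun x : Sph d => (fun i => (x : EuclideanSpace ℝ (Fin (d + 1))) i) := by
    refine continuous_pi fun i => ?_
    exact Continuous.comp (continuous_apply i) ((PiLp.continuous_ofLp _ _).comp continuous_subtype_val)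
  show Continuous ((fun v : Fin (d + 1) → ℝ => MvPolynomial.eval v p) ∘
    (fun x : Sph d => fun i => (x : EuclideanSpace ℝ (Fin (d + 1))) i))
  exact Continuous.comp (MvPolynomial.continuous_eval (p := p)) h1

private lemma sph_intYY (S : SHSetup d) (ℓ ℓ' : ℕ) (k : Fin (Zdim d ℓ))
    (k' : Fin (Zdim d ℓ')) :
    Integrable (fun x => S.Y ℓ k x * S.Y ℓ' k' x) (sphMeasure d) := by
  have sqint : ∀ (ℓ0 : ℕ) (k0 : Fin (Zdim d ℓ0)),
      Integrable (fun x => S.Y ℓ0 k0 x * S.Y ℓ0 k0 x) (sphMeasure d) := by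
    intro ℓ0 k0
    by_contra h
    have h2 := S.orthonormal ℓ0 ℓ0 k0 k0
    rw [integral_undef h] at h2
    simp at h2
  have hg : Integrable
      (fun x => (1/2 : ℝ) * (S.Y ℓ k x * S.Y ℓ k x + S.Y ℓ' k' x * S.Y ℓ' k' x))
      (sphMeasure d) := ((sqint ℓ k).add (sqint ℓ' k')).const_mul _
  refine Integrable.mono' hg
    ((sph_contY S ℓ k).mul (sph_contY S ℓ' k')).aestronglyMeasurable
    (Filter.Eventually.of_forall fun x => ?_)
  rw [Real.norm_eq_abs, abs_le]
  constructor <;> nlinarith [sq_nonneg (S.Y ℓ k x - S.Y ℓ' k' x),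
    sq_nonneg (S.Y ℓ k x + S.Y ℓ' k' x)]

private lemma sph_sigma_eq_iff {p q : Σ ℓ : ℕ, Fin (Zdim d ℓ)} :
    (p.1 = q.1 ∧ (p.2 : ℕ) = (q.2 : ℕ)) ↔ p = q := by
  constructor
  · rcases p with ⟨a, i⟩
    rcases q with ⟨b, j⟩
    rintro ⟨h1, h2⟩
    dsimp only at h1 h2
    subst h1
    exact congrArg (Sigma.mk a) (Fin.ext h2)
  · rintro rfl; exact ⟨rfl, rfl⟩

private lemma sph_integral_prod_eq (S : SHSetup d) (n : ℕ)
    (c c' : (ℓ : ℕ) → Fin (Zdim d ℓ) → ℝ) :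
    ∫ x, (∑ p ∈ (Finset.range (n + 1)).sigma (fun ℓ => (Finset.univ : Finset (Fin (Zdim d ℓ)))),
          c p.1 p.2 * S.Y p.1 p.2 x) *
        (∑ q ∈ (Finset.range (n + 1)).sigma (fun ℓ => (Finset.univ : Finset (Fin (Zdim d ℓ)))),
          c' q.1 q.2 * S.Y q.1 q.2 x) ∂(sphMeasure d)
      = ∑ p ∈ (Finset.range (n + 1)).sigma (fun ℓ => (Finset.univ : Finset (Fin (Zdim d ℓ)))),
          c p.1 p.2 * c' p.1 p.2 := by
  classical
  set I : Finset (Σ ℓ : ℕ, Fin (Zdim d ℓ)) :=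
    (Finset.range (n + 1)).sigma fun ℓ => Finset.univ with hI
  have hterm : ∀ (p q : Σ ℓ : ℕ, Fin (Zdim d ℓ)),
      Integrable (fun x => (c p.1 p.2 * S.Y p.1 p.2 x) * (c' q.1 q.2 * S.Y q.1 q.2 x))
        (sphMeasure d) := by
    intro p q
    have h : (fun x => (c p.1 p.2 * S.Y p.1 p.2 x) * (c' q.1 q.2 * S.Y q.1 q.2 x))
        = fun x => (c p.1 p.2 * c' q.1 q.2) * (S.Y p.1 p.2 x * S.Y q.1 q.2 x) :=
      funext fun x => by ring
    rw [h]
    exact (sph_intYY S _ _ _ _).const_mul _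
  rw [show (fun x => (∑ p ∈ I, c p.1 p.2 * S.Y p.1 p.2 x) *
        (∑ q ∈ I, c' q.1 q.2 * S.Y q.1 q.2 x))
      = fun x => ∑ p ∈ I, ∑ q ∈ I, (c p.1 p.2 * S.Y p.1 p.2 x) * (c' q.1 q.2 * S.Y q.1 q.2 x)
      from funext fun x => Finset.sum_mul_sum _ _ _ _]
  rw [integral_finset_sum _ (fun p _ => integrable_finset_sum _ (fun q _ => hterm p q))]
  refine Finset.sum_congr rfl fun p hp => ?_
  rw [integral_finset_sum _ (fun q _ => hterm p q)]
  have hval : ∀ q ∈ I,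
      ∫ x, (c p.1 p.2 * S.Y p.1 p.2 x) * (c' q.1 q.2 * S.Y q.1 q.2 x) ∂(sphMeasure d)
      = if p = q then c p.1 p.2 * c' q.1 q.2 else 0 := by
    intro q _
    have h1 : (fun x => (c p.1 p.2 * S.Y p.1 p.2 x) * (c' q.1 q.2 * S.Y q.1 q.2 x))
        = fun x => (c p.1 p.2 * c' q.1 q.2) * (S.Y p.1 p.2 x * S.Y q.1 q.2 x) :=
      funext fun x => by ring
    rw [h1, integral_const_mul, S.orthonormal]
    rcases eq_or_ne p q with h | h
    · rw [if_pos (sph_sigma_eq_iff.mpr h), if_pos h, mul_one]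
    · rw [if_neg (fun hh => h (sph_sigma_eq_iff.mp hh)), if_neg h, mul_zero]
  rw [Finset.sum_congr rfl hval, Finset.sum_ite_eq, if_pos hp]

private lemma sph_l2NormSq_sum (S : SHSetup d) (n : ℕ)
    (c : (ℓ : ℕ) → Fin (Zdim d ℓ) → ℝ) :
    l2NormSq d (fun x => ∑ ℓ ∈ Finset.range (n + 1), ∑ k, c ℓ k * S.Y ℓ k x)
      = ∑ p ∈ (Finset.range (n + 1)).sigma (fun ℓ => (Finset.univ : Finset (Fin (Zdim d ℓ)))),
          c p.1 p.2 ^ 2 := by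
  have hfun : (fun x : Sph d => (∑ ℓ ∈ Finset.range (n + 1), ∑ k, c ℓ k * S.Y ℓ k x) ^ 2)
      = fun x => (∑ p ∈ (Finset.range (n + 1)).sigma
            (fun ℓ => (Finset.univ : Finset (Fin (Zdim d ℓ)))), c p.1 p.2 * S.Y p.1 p.2 x) *
          (∑ q ∈ (Finset.range (n + 1)).sigma
            (fun ℓ => (Finset.univ : Finset (Fin (Zdim d ℓ)))), c q.1 q.2 * S.Y q.1 q.2 x) := by
    funext x
    rw [pow_two, Finset.sum_sigma' (f := fun ℓ k => c ℓ k * S.Y ℓ k x)]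
  show (∫ x, (∑ ℓ ∈ Finset.range (n + 1), ∑ k, c ℓ k * S.Y ℓ k x) ^ 2 ∂(sphMeasure d)) = _
  rw [hfun, sph_integral_prod_eq]
  exact Finset.sum_congr rfl fun p _ => (pow_two (c p.1 p.2)).symm

end AuxStatement3

set_option maxHeartbeats 1600000 in
/-- Lemma 3.1(b): under the Marcinkiewicz–Zygmund property with
constant `η ∈ [0,1)` for degree `n`, for every `χ ∈ P_n(S^d)` one has
`(1−η)‖χ‖_{L²} ≤ ‖U_n χ‖_{L²} ≤ (1+η)‖χ‖_{L²}`. -/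
theorem statement3 (d : ℕ) (hd : 2 ≤ d) (S : SHSetup d)
    (n m : ℕ) (w : Fin m → ℝ) (hw : ∀ j, 0 < w j) (pts : Fin m → Sph d)
    (η : ℝ) (hη0 : 0 ≤ η) (hη1 : η < 1) (hMZ : MZProperty S n m w pts η)
    (χ : Sph d → ℝ) (hχ : inPn S n χ) :
    (1 - η) * l2Norm d χ ≤ l2Norm d (hyper S n m w pts χ) ∧
    l2Norm d (hyper S n m w pts χ) ≤ (1 + η) * l2Norm d χ := by
  classical
  obtain ⟨c, hc⟩ := hχ
  set I : Finset (Σ ℓ : ℕ, Fin (Zdim d ℓ)) :=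
    (Finset.range (n + 1)).sigma fun ℓ => Finset.univ with hI
  set b : (ℓ : ℕ) → Fin (Zdim d ℓ) → ℝ :=
    fun ℓ k => ∑ j, w j * χ (pts j) * S.Y ℓ k (pts j) with hb
  set U : Sph d → ℝ := hyper S n m w pts χ with hUdef
  have hU : U = fun x => ∑ ℓ ∈ Finset.range (n + 1), ∑ k, b ℓ k * S.Y ℓ k x := rfl
  set A : ℝ := ∑ p ∈ I, c p.1 p.2 ^ 2 with hA
  set B : ℝ := ∑ p ∈ I, b p.1 p.2 ^ 2 with hB
  have hA0 : 0 ≤ A := Finset.sum_nonneg fun _ _ => sq_nonneg _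
  have hB0 : 0 ≤ B := Finset.sum_nonneg fun _ _ => sq_nonneg _
  -- L² norms in terms of coefficients
  have hnχ : l2Norm d χ = Real.sqrt A := by
    unfold l2Norm
    rw [hc, sph_l2NormSq_sum, hA, hI]
  have hnU : l2Norm d U = Real.sqrt B := by
    unfold l2Norm
    rw [hU, sph_l2NormSq_sum, hB, hI]
  -- integrals of squares
  have hintχ : ∫ x, χ x ^ 2 ∂(sphMeasure d) = A := by
    have h : ∫ x, χ x ^ 2 ∂(sphMeasure d) = l2NormSq d χ := rfl
    rw [h, hc, sph_l2NormSq_sum, hA, hI]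
  have hintU : ∫ x, U x ^ 2 ∂(sphMeasure d) = B := by
    have h : ∫ x, U x ^ 2 ∂(sphMeasure d) = l2NormSq d U := rfl
    rw [h, hU, sph_l2NormSq_sum, hB, hI]
  -- pointwise expansions
  have hχpt : ∀ z : Sph d, ∑ p ∈ I, c p.1 p.2 * S.Y p.1 p.2 z = χ z := by
    intro z
    rw [hc]
    show (∑ p ∈ I, c p.1 p.2 * S.Y p.1 p.2 z)
        = ∑ ℓ ∈ Finset.range (n + 1), ∑ k, c ℓ k * S.Y ℓ k z
    rw [hI]
    exact (Finset.sum_sigma' (Finset.range (n + 1)) (fun ℓ => Finset.univ)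
      (fun ℓ k => c ℓ k * S.Y ℓ k z)).symm
  have hUpt : ∀ z : Sph d, ∑ p ∈ I, b p.1 p.2 * S.Y p.1 p.2 z = U z := by
    intro z
    rw [hU]
    show (∑ p ∈ I, b p.1 p.2 * S.Y p.1 p.2 z)
        = ∑ ℓ ∈ Finset.range (n + 1), ∑ k, b ℓ k * S.Y ℓ k z
    rw [hI]
    exact (Finset.sum_sigma' (Finset.range (n + 1)) (fun ℓ => Finset.univ)
      (fun ℓ k => b ℓ k * S.Y ℓ k z)).symm
  clear_value I b U A B
  -- discrete pairing identities
  have hswap : ∀ g : (ℓ : ℕ) → Fin (Zdim d ℓ) → ℝ,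
      ∑ p ∈ I, g p.1 p.2 * b p.1 p.2
        = ∑ j, w j * χ (pts j) * (∑ p ∈ I, g p.1 p.2 * S.Y p.1 p.2 (pts j)) := by
    intro g
    have h1 : ∀ p ∈ I, g p.1 p.2 * b p.1 p.2
        = ∑ j, g p.1 p.2 * (w j * χ (pts j) * S.Y p.1 p.2 (pts j)) := by
      intro p _
      rw [hb]
      exact Finset.mul_sum _ _ _
    rw [Finset.sum_congr rfl h1, Finset.sum_comm]
    refine Finset.sum_congr rfl fun j _ => ?_
    rw [Finset.mul_sum]
    exact Finset.sum_congr rfl fun p _ => by ring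
  have hP : ∑ p ∈ I, c p.1 p.2 * b p.1 p.2 = ∑ j, w j * χ (pts j) ^ 2 := by
    rw [hswap]
    exact Finset.sum_congr rfl fun j _ => by rw [hχpt]; ring
  have hQ : B = ∑ j, w j * χ (pts j) * U (pts j) := by
    have h1 : B = ∑ p ∈ I, b p.1 p.2 * b p.1 p.2 := by
      rw [hB]
      exact Finset.sum_congr rfl fun p _ => pow_two _
    rw [h1, hswap]
    exact Finset.sum_congr rfl fun j _ => by rw [hUpt]
  -- Marcinkiewicz–Zygmund bounds
  have hMZχ := hMZ χ ⟨c, hc⟩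
  rw [hintχ, abs_le] at hMZχ
  have hMZU := hMZ U ⟨b, hU⟩
  rw [hintU, abs_le] at hMZU
  have hlowχ : (1 - η) * A ≤ ∑ j, w j * χ (pts j) ^ 2 := by nlinarith [hMZχ.1]
  have hhighχ : ∑ j, w j * χ (pts j) ^ 2 ≤ (1 + η) * A := by nlinarith [hMZχ.2]
  have hhighU : ∑ j, w j * U (pts j) ^ 2 ≤ (1 + η) * B := by nlinarith [hMZU.2]
  -- Cauchy–Schwarz (coefficients)
  have hCS1 : (∑ p ∈ I, c p.1 p.2 * b p.1 p.2) ^ 2 ≤ A * B := by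
    rw [hA, hB]
    exact Finset.sum_mul_sq_le_sq_mul_sq I (fun p => c p.1 p.2) (fun p => b p.1 p.2)
  -- Cauchy–Schwarz (weighted sums)
  have hCS2 : (∑ j, w j * χ (pts j) * U (pts j)) ^ 2
      ≤ (∑ j, w j * χ (pts j) ^ 2) * (∑ j, w j * U (pts j) ^ 2) := by
    have h := Finset.sum_mul_sq_le_sq_mul_sq Finset.univ
      (fun j => Real.sqrt (w j) * χ (pts j)) (fun j => Real.sqrt (w j) * U (pts j))
    have e1 : ∀ j : Fin m, (Real.sqrt (w j) * χ (pts j)) * (Real.sqrt (w j) * U (pts j))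
        = w j * χ (pts j) * U (pts j) := by
      intro j
      rw [mul_mul_mul_comm, Real.mul_self_sqrt (hw j).le]
      ring
    have e2 : ∀ j : Fin m, (Real.sqrt (w j) * χ (pts j)) ^ 2 = w j * χ (pts j) ^ 2 := by
      intro j
      rw [mul_pow, Real.sq_sqrt (hw j).le]
    have e3 : ∀ j : Fin m, (Real.sqrt (w j) * U (pts j)) ^ 2 = w j * U (pts j) ^ 2 := by
      intro j
      rw [mul_pow, Real.sq_sqrt (hw j).le]
    simpa only [e1, e2, e3] using h
  have hnnχw : 0 ≤ ∑ j, w j * χ (pts j) ^ 2 :=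
    Finset.sum_nonneg fun j _ => mul_nonneg (hw j).le (sq_nonneg _)
  have hnnUw : 0 ≤ ∑ j, w j * U (pts j) ^ 2 :=
    Finset.sum_nonneg fun j _ => mul_nonneg (hw j).le (sq_nonneg _)
  have hAs : Real.sqrt A * Real.sqrt A = A := Real.mul_self_sqrt hA0
  have hBs : Real.sqrt B * Real.sqrt B = B := Real.mul_self_sqrt hB0
  rw [hnχ, hnU]
  constructor
  · -- lower bound
    have habs : ∑ p ∈ I, c p.1 p.2 * b p.1 p.2 ≤ Real.sqrt A * Real.sqrt B := by
      calc ∑ p ∈ I, c p.1 p.2 * b p.1 p.2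
          ≤ |∑ p ∈ I, c p.1 p.2 * b p.1 p.2| := le_abs_self _
        _ = Real.sqrt ((∑ p ∈ I, c p.1 p.2 * b p.1 p.2) ^ 2) :=
            (Real.sqrt_sq_eq_abs _).symm
        _ ≤ Real.sqrt (A * B) := Real.sqrt_le_sqrt hCS1
        _ = Real.sqrt A * Real.sqrt B := Real.sqrt_mul hA0 B
    have hkey : (1 - η) * A ≤ Real.sqrt A * Real.sqrt B := by
      calc (1 - η) * A ≤ ∑ j, w j * χ (pts j) ^ 2 := hlowχ
        _ = ∑ p ∈ I, c p.1 p.2 * b p.1 p.2 := hP.symm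
        _ ≤ Real.sqrt A * Real.sqrt B := habs
    rcases eq_or_lt_of_le (Real.sqrt_nonneg A) with h | h
    · rw [← h]
      simpa using Real.sqrt_nonneg B
    · nlinarith [hkey, hAs, h]
  · -- upper bound
    have hBB : B ^ 2 ≤ ((1 + η) * A) * ((1 + η) * B) := by
      calc B ^ 2 = (∑ j, w j * χ (pts j) * U (pts j)) ^ 2 := by rw [← hQ]
        _ ≤ (∑ j, w j * χ (pts j) ^ 2) * (∑ j, w j * U (pts j) ^ 2) := hCS2
        _ ≤ ((1 + η) * A) * ((1 + η) * B) :=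
            mul_le_mul hhighχ hhighU hnnUw (by nlinarith)
    rcases eq_or_lt_of_le hB0 with h | h
    · rw [← h]
      simp only [Real.sqrt_zero]
      exact mul_nonneg (by linarith) (Real.sqrt_nonneg A)
    · have hBA : B ≤ (1 + η) ^ 2 * A := by nlinarith [hBB, h]
      calc Real.sqrt B ≤ Real.sqrt ((1 + η) ^ 2 * A) := Real.sqrt_le_sqrt hBA
        _ = (1 + η) * Real.sqrt A := by
            rw [Real.sqrt_mul (sq_nonneg _), Real.sqrt_sq (by linarith)]

end
end

section
/- Suppose the positive-weight quadrature rule {(w_j, x_j)}_{j=1}^m on S^d satisfies the Marcinkiewicz–Zygmund property with constant η ∈ [0,1) for degree n. Then for every χ ∈ P_n(S^d), ‖U_n χ − χ‖²_{L²} ≤ (η² + 4η) ‖χ‖²_{L²}. -/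
open MeasureTheory

noncomputable section

variable {d : ℕ}

namespace Statement4Aux

variable {d : ℕ}

/-- Linear combination of spherical harmonics of degree ≤ n. -/
def F (S : SHSetup d) (n : ℕ) (a : (ℓ : ℕ) → Fin (Zdim d ℓ) → ℝ) : Sph d → ℝ :=
  fun x => ∑ ℓ ∈ Finset.range (n + 1), ∑ k, a ℓ k * S.Y ℓ k x

lemma contY (S : SHSetup d) (ℓ : ℕ) (k : Fin (Zdim d ℓ)) : Continuous (S.Y ℓ k) := by
  obtain ⟨p, -, -, hp⟩ := S.harmonic ℓ k
  have h : S.Y ℓ k = fun x : Sph d =>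
      MvPolynomial.eval (fun i => (x : EuclideanSpace ℝ (Fin (d + 1))) i) p := funext hp
  rw [h]
  exact p.continuous_eval.comp (continuous_pi fun i =>
    (continuous_apply i).comp ((PiLp.continuous_ofLp _ _).comp continuous_subtype_val))

lemma intY2 (S : SHSetup d) (ℓ : ℕ) (k : Fin (Zdim d ℓ)) :
    Integrable (fun x => S.Y ℓ k x * S.Y ℓ k x) (sphMeasure d) := by
  by_contra h
  have h0 := MeasureTheory.integral_undef h
  have h1 := S.orthonormal ℓ ℓ k k
  rw [if_pos ⟨rfl, rfl⟩, h0] at h1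
  exact zero_ne_one h1

lemma intYY (S : SHSetup d) (ℓ ℓ' : ℕ) (k : Fin (Zdim d ℓ)) (k' : Fin (Zdim d ℓ')) :
    Integrable (fun x => S.Y ℓ k x * S.Y ℓ' k' x) (sphMeasure d) := by
  have hb : Integrable (fun x =>
      (1/2 : ℝ) * (S.Y ℓ k x * S.Y ℓ k x + S.Y ℓ' k' x * S.Y ℓ' k' x)) (sphMeasure d) :=
    ((intY2 S ℓ k).add (intY2 S ℓ' k')).const_mul _
  refine hb.mono' (((contY S ℓ k).mul (contY S ℓ' k')).aestronglyMeasurable) ?_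
  filter_upwards with x
  rw [Real.norm_eq_abs, abs_mul]
  nlinarith [sq_nonneg (|S.Y ℓ k x| - |S.Y ℓ' k' x|), sq_abs (S.Y ℓ k x),
    sq_abs (S.Y ℓ' k' x), abs_nonneg (S.Y ℓ k x), abs_nonneg (S.Y ℓ' k' x)]

lemma mulF_eq (S : SHSetup d) (n : ℕ) (ℓ : ℕ) (k : Fin (Zdim d ℓ))
    (e : (ℓ : ℕ) → Fin (Zdim d ℓ) → ℝ) :
    (fun x => S.Y ℓ k x * F S n e x) = fun x =>
      ∑ ℓ' ∈ Finset.range (n + 1), ∑ k', e ℓ' k' * (S.Y ℓ k x * S.Y ℓ' k' x) := by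
  funext x
  simp only [F, Finset.mul_sum]
  exact Finset.sum_congr rfl fun _ _ => Finset.sum_congr rfl fun _ _ => by ring

lemma intYF (S : SHSetup d) (n : ℕ) (ℓ : ℕ) (k : Fin (Zdim d ℓ))
    (e : (ℓ : ℕ) → Fin (Zdim d ℓ) → ℝ) :
    Integrable (fun x => S.Y ℓ k x * F S n e x) (sphMeasure d) := by
  rw [mulF_eq]
  exact integrable_finset_sum _ fun ℓ' _ => integrable_finset_sum _ fun k' _ =>
    (intYY S ℓ ℓ' k k').const_mul _

lemma intYFval (S : SHSetup d) (n : ℕ) (ℓ : ℕ) (hℓ : ℓ ∈ Finset.range (n + 1))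
    (k : Fin (Zdim d ℓ)) (e : (ℓ : ℕ) → Fin (Zdim d ℓ) → ℝ) :
    ∫ x, S.Y ℓ k x * F S n e x ∂(sphMeasure d) = e ℓ k := by
  rw [mulF_eq, MeasureTheory.integral_finset_sum _ fun ℓ' _ =>
    integrable_finset_sum _ fun k' _ => (intYY S ℓ ℓ' k k').const_mul _]
  have h1 : ∀ ℓ' ∈ Finset.range (n + 1),
      ∫ x, ∑ k', e ℓ' k' * (S.Y ℓ k x * S.Y ℓ' k' x) ∂(sphMeasure d) =
        ∑ k', e ℓ' k' * (if ℓ = ℓ' ∧ (k : ℕ) = (k' : ℕ) then (1:ℝ) else 0) := by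
    intro ℓ' _
    rw [MeasureTheory.integral_finset_sum _ fun k' _ => (intYY S ℓ ℓ' k k').const_mul _]
    exact Finset.sum_congr rfl fun k' _ => by
      rw [MeasureTheory.integral_const_mul, S.orthonormal ℓ ℓ' k k']
  rw [Finset.sum_congr rfl h1]
  rw [Finset.sum_eq_single_of_mem ℓ hℓ (fun b _ hne => Finset.sum_eq_zero fun k' _ => by
    rw [if_neg (fun h => hne h.1.symm), mul_zero])]
  rw [Finset.sum_eq_single_of_mem k (Finset.mem_univ k) (fun k' _ hk' => by
    rw [if_neg (fun h => hk' (Fin.ext h.2.symm)), mul_zero])]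
  rw [if_pos ⟨rfl, rfl⟩, mul_one]

lemma intFF (S : SHSetup d) (n : ℕ) (c e : (ℓ : ℕ) → Fin (Zdim d ℓ) → ℝ) :
    ∫ x, F S n c x * F S n e x ∂(sphMeasure d) =
      ∑ ℓ ∈ Finset.range (n + 1), ∑ k, c ℓ k * e ℓ k := by
  have h : (fun x => F S n c x * F S n e x) = fun x =>
      ∑ ℓ ∈ Finset.range (n + 1), ∑ k, c ℓ k * (S.Y ℓ k x * F S n e x) := by
    funext x
    conv_lhs => rw [F]
    simp only [Finset.sum_mul]
    exact Finset.sum_congr rfl fun _ _ => Finset.sum_congr rfl fun _ _ => by ring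
  rw [h, MeasureTheory.integral_finset_sum _ fun ℓ _ =>
    integrable_finset_sum _ fun k _ => (intYF S n ℓ k e).const_mul _]
  refine Finset.sum_congr rfl fun ℓ hℓ => ?_
  rw [MeasureTheory.integral_finset_sum _ fun k _ => (intYF S n ℓ k e).const_mul _]
  exact Finset.sum_congr rfl fun k _ => by
    rw [MeasureTheory.integral_const_mul, intYFval S n ℓ hℓ k e]

lemma intF2 (S : SHSetup d) (n : ℕ) (a : (ℓ : ℕ) → Fin (Zdim d ℓ) → ℝ) :
    ∫ x, F S n a x ^ 2 ∂(sphMeasure d) =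
      ∑ ℓ ∈ Finset.range (n + 1), ∑ k, a ℓ k ^ 2 := by
  simp only [sq]
  exact intFF S n a a

lemma F_add (S : SHSetup d) (n : ℕ) (a b : (ℓ : ℕ) → Fin (Zdim d ℓ) → ℝ) (x : Sph d) :
    F S n (fun ℓ k => a ℓ k + b ℓ k) x = F S n a x + F S n b x := by
  simp only [F, ← Finset.sum_add_distrib, add_mul]

lemma F_sub (S : SHSetup d) (n : ℕ) (a b : (ℓ : ℕ) → Fin (Zdim d ℓ) → ℝ) (x : Sph d) :
    F S n (fun ℓ k => a ℓ k - b ℓ k) x = F S n a x - F S n b x := by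
  simp only [F, ← Finset.sum_sub_distrib, sub_mul]

lemma discSwap (S : SHSetup d) (n m : ℕ) (w : Fin m → ℝ) (pts : Fin m → Sph d)
    (g : Sph d → ℝ) (v : (ℓ : ℕ) → Fin (Zdim d ℓ) → ℝ) :
    ∑ j, w j * g (pts j) * F S n v (pts j) =
      ∑ ℓ ∈ Finset.range (n + 1), ∑ k, v ℓ k * (∑ j, w j * g (pts j) * S.Y ℓ k (pts j)) := by
  simp only [F, Finset.mul_sum]
  rw [Finset.sum_comm]
  refine Finset.sum_congr rfl fun ℓ _ => ?_
  rw [Finset.sum_comm]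
  exact Finset.sum_congr rfl fun k _ => Finset.sum_congr rfl fun j _ => by ring

end Statement4Aux

open Statement4Aux in
/-- Lemma 3.1(c): under the Marcinkiewicz–Zygmund property with
constant `η ∈ [0,1)` for degree `n`, for every `χ ∈ P_n(S^d)` one has
`‖U_n χ − χ‖²_{L²} ≤ (η² + 4η)‖χ‖²_{L²}`. -/
theorem statement4 (d : ℕ) (hd : 2 ≤ d) (S : SHSetup d)
    (n m : ℕ) (w : Fin m → ℝ) (hw : ∀ j, 0 < w j) (pts : Fin m → Sph d)
    (η : ℝ) (hη0 : 0 ≤ η) (hη1 : η < 1) (hMZ : MZProperty S n m w pts η)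
    (χ : Sph d → ℝ) (hχ : inPn S n χ) :
    l2NormSq d (fun x => hyper S n m w pts χ x - χ x) ≤
      (η ^ 2 + 4 * η) * l2NormSq d χ := by
  obtain ⟨c, hc⟩ := hχ
  have hχF : χ = F S n c := hc
  -- discrete coefficients
  set b : (ℓ : ℕ) → Fin (Zdim d ℓ) → ℝ :=
    fun ℓ k => ∑ j, w j * χ (pts j) * S.Y ℓ k (pts j) with hbdef
  set v : (ℓ : ℕ) → Fin (Zdim d ℓ) → ℝ := fun ℓ k => b ℓ k - c ℓ k with hvdef
  set a2 : (ℓ : ℕ) → Fin (Zdim d ℓ) → ℝ := fun ℓ k => 2 * c ℓ k - b ℓ k with ha2def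
  have hhyper : hyper S n m w pts χ = F S n b := rfl
  have hdiff : (fun x => hyper S n m w pts χ x - χ x) = F S n v := by
    funext x
    rw [hvdef, F_sub S n b c x, hhyper, hχF]
  -- abbreviations for coefficient sums
  set P := ∑ ℓ ∈ Finset.range (n + 1), ∑ k, v ℓ k ^ 2 with hP
  set C2 := ∑ ℓ ∈ Finset.range (n + 1), ∑ k, c ℓ k ^ 2 with hC2
  set B2 := ∑ ℓ ∈ Finset.range (n + 1), ∑ k, b ℓ k ^ 2 with hB2
  set D2 := ∑ ℓ ∈ Finset.range (n + 1), ∑ k, a2 ℓ k ^ 2 with hD2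
  have hL : l2NormSq d (fun x => hyper S n m w pts χ x - χ x) = P := by
    rw [hdiff]; exact intF2 S n v
  have hR : l2NormSq d χ = C2 := by rw [hχF]; exact intF2 S n c
  rw [hL, hR]
  -- the two MZ bounds
  set s1 := ∑ j, w j * F S n b (pts j) ^ 2 with hs1
  set s2 := ∑ j, w j * F S n a2 (pts j) ^ 2 with hs2
  have hMZ1 : |s1 - B2| ≤ η * B2 := by
    have h := hMZ (F S n b) ⟨b, rfl⟩
    rwa [intF2 S n b] at h
  have hMZ2 : |s2 - D2| ≤ η * D2 := by
    have h := hMZ (F S n a2) ⟨a2, rfl⟩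
    rwa [intF2 S n a2] at h
  -- pointwise decompositions
  have hFb : ∀ x, F S n b x = χ x + F S n v x := by
    intro x
    have : F S n b x = F S n (fun ℓ k => c ℓ k + v ℓ k) x := by
      congr 1; funext ℓ k; simp [hvdef]
    rw [this, F_add S n c v x, hχF]
  have hFa2 : ∀ x, F S n a2 x = χ x - F S n v x := by
    intro x
    have : F S n a2 x = F S n (fun ℓ k => c ℓ k - v ℓ k) x := by
      congr 1; funext ℓ k; simp [hvdef, ha2def]; ring
    rw [this, F_sub S n c v x, hχF]
  -- discrete identity: s1 - s2 = 4 * Σ v b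
  set T := ∑ ℓ ∈ Finset.range (n + 1), ∑ k, v ℓ k * b ℓ k with hT
  have hdisc : s1 - s2 = 4 * T := by
    rw [hs1, hs2, ← Finset.sum_sub_distrib]
    have h1 : ∀ j ∈ Finset.univ, w j * F S n b (pts j) ^ 2 - w j * F S n a2 (pts j) ^ 2
        = 4 * (w j * χ (pts j) * F S n v (pts j)) := by
      intro j _
      rw [hFb (pts j), hFa2 (pts j)]; ring
    rw [Finset.sum_congr rfl h1, ← Finset.mul_sum, discSwap S n m w pts χ v]
  -- coefficient identities
  set U := ∑ ℓ ∈ Finset.range (n + 1), ∑ k, c ℓ k * v ℓ k with hU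
  have hcoef : B2 - D2 = 4 * U := by
    rw [hB2, hD2, hU, ← Finset.sum_sub_distrib, Finset.mul_sum]
    refine Finset.sum_congr rfl fun ℓ _ => ?_
    rw [← Finset.sum_sub_distrib, Finset.mul_sum]
    refine Finset.sum_congr rfl fun k _ => ?_
    simp only [ha2def, hvdef]; ring
  have hTU : T - U = P := by
    rw [hT, hU, hP, ← Finset.sum_sub_distrib]
    refine Finset.sum_congr rfl fun ℓ _ => ?_
    rw [← Finset.sum_sub_distrib]
    refine Finset.sum_congr rfl fun k _ => ?_
    simp only [hvdef]; ring
  have hpar : B2 + D2 = 2 * C2 + 2 * P := by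
    rw [hB2, hD2, hC2, hP, ← Finset.sum_add_distrib]
    have : (2:ℝ) * (∑ ℓ ∈ Finset.range (n+1), ∑ k, c ℓ k ^ 2)
        + 2 * (∑ ℓ ∈ Finset.range (n+1), ∑ k, v ℓ k ^ 2)
        = ∑ ℓ ∈ Finset.range (n+1), ((2:ℝ) * (∑ k, c ℓ k ^ 2) + 2 * (∑ k, v ℓ k ^ 2)) := by
      rw [Finset.sum_add_distrib, Finset.mul_sum, Finset.mul_sum]
    rw [this]
    refine Finset.sum_congr rfl fun ℓ _ => ?_
    rw [← Finset.sum_add_distrib, Finset.mul_sum, Finset.mul_sum, ← Finset.sum_add_distrib]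
    refine Finset.sum_congr rfl fun k _ => ?_
    simp only [ha2def, hvdef]; ring
  have hPnn : 0 ≤ P := Finset.sum_nonneg fun _ _ => Finset.sum_nonneg fun _ _ => sq_nonneg _
  have hCnn : 0 ≤ C2 := Finset.sum_nonneg fun _ _ => Finset.sum_nonneg fun _ _ => sq_nonneg _
  have h4P : 4 * P = (s1 - B2) - (s2 - D2) := by
    have : 4 * P = 4 * T - 4 * U := by rw [← hTU]; ring
    rw [this, ← hdisc, ← hcoef]; ring
  have habs : 4 * P ≤ η * B2 + η * D2 := by
    have h1 := le_abs_self (s1 - B2)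
    have h2 := neg_abs_le (s2 - D2)
    linarith
  have hkey : (4 - 2 * η) * P ≤ 2 * η * C2 := by nlinarith
  nlinarith [mul_nonneg hη0 hCnn, mul_nonneg (mul_nonneg hη0 hη0) hCnn,
    mul_nonneg (mul_nonneg (mul_nonneg hη0 hη0) hη0) hCnn, mul_nonneg hη0 hPnn,
    mul_nonneg (sub_nonneg.2 hη1.le) hPnn]

end
end

section
/- Let f ∈ C(S^d) and suppose the m-point positive-weight quadrature rule {(w_j, x_j)}_{j=1}^m satisfies the Marcinkiewicz–Zygmund property with constant η ∈ [0,1) for degree n. Then the unfettered hyperinterpolant satisfies the stability bound ‖U_n f‖_{L²} ≤ √(1+η) · (Σ_{j=1}^m w_j)^{1/2} · ‖f‖_∞. -/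
open MeasureTheory

noncomputable section

variable {d : ℕ}

namespace Stmt5Aux

lemma zdim_zero {d : ℕ} (hd : 2 ≤ d) : Zdim d 0 = 1 := by
  obtain ⟨e, rfl⟩ : ∃ e, d = e + 2 := ⟨d - 2, by omega⟩
  show (2 * 0 + (e + 2) - 1) * Nat.factorial (0 + (e + 2) - 2) /
      (Nat.factorial ((e + 2) - 1) * Nat.factorial 0) = 1
  have h1 : 2 * 0 + (e + 2) - 1 = e + 1 := by omega
  have h2 : 0 + (e + 2) - 2 = e := by omega
  have h3 : (e + 2) - 1 = e + 1 := by omega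
  rw [h1, h2, h3, Nat.factorial_succ, Nat.factorial, mul_one]
  exact Nat.div_self (by positivity)

lemma eval_of_homog_zero {N : ℕ} {p : MvPolynomial (Fin N) ℝ} (hp : p.IsHomogeneous 0)
    (v : Fin N → ℝ) : MvPolynomial.eval v p = MvPolynomial.coeff 0 p := by
  have ht : p.totalDegree = 0 := (MvPolynomial.totalDegree_zero_iff_isHomogeneous (Fin N)).mpr hp
  have hm := (MvPolynomial.totalDegree_eq_zero_iff (Fin N) p).mp ht
  have hsub : p.support ⊆ {0} := by
    intro q hq
    simp only [Finset.mem_singleton]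
    ext x
    exact hm q hq x
  rw [MvPolynomial.eval_eq]
  by_cases h0 : (0 : Fin N →₀ ℕ) ∈ p.support
  · have hsupp : p.support = {0} := Finset.Subset.antisymm hsub (by simpa using h0)
    rw [hsupp]
    simp
  · have hsupp : p.support = ∅ := by
      refine Finset.eq_empty_of_forall_notMem fun q hq => ?_
      have := hsub hq
      simp only [Finset.mem_singleton] at this
      exact h0 (this ▸ hq)
    rw [hsupp]
    have : MvPolynomial.coeff 0 p = 0 := by
      simpa [MvPolynomial.mem_support_iff] using h0
    simp [this]

lemma cont_Y {d : ℕ} (S : SHSetup d) (ℓ : ℕ) (k : Fin (Zdim d ℓ)) : Continuous (S.Y ℓ k) := by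
  obtain ⟨p, _, _, hp⟩ := S.harmonic ℓ k
  have hY : S.Y ℓ k = fun x : Sph d =>
      MvPolynomial.eval (fun i => (x : EuclideanSpace ℝ (Fin (d + 1))) i) p := funext hp
  rw [hY]
  exact (MvPolynomial.continuous_eval p).comp
    (continuous_pi fun i => (continuous_apply i).comp ((PiLp.continuous_ofLp 2 _).comp continuous_subtype_val))

lemma fin_meas {d : ℕ} (hd : 2 ≤ d) (S : SHSetup d) : IsFiniteMeasure (sphMeasure d) := by
  constructor
  by_contra h
  have htop : sphMeasure d Set.univ = ⊤ := by
    simpa [lt_top_iff_ne_top] using h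
  have hz : 0 < Zdim d 0 := by rw [zdim_zero hd]; norm_num
  set k : Fin (Zdim d 0) := ⟨0, hz⟩
  obtain ⟨p, hp0, _, hp⟩ := S.harmonic 0 k
  have hconst : ∀ x : Sph d, S.Y 0 k x = MvPolynomial.coeff 0 p := fun x => by
    rw [hp x, eval_of_homog_zero hp0]
  have horth := S.orthonormal 0 0 k k
  simp only [and_self, if_true] at horth
  rw [show (fun x => S.Y 0 k x * S.Y 0 k x)
      = fun _ : Sph d => MvPolynomial.coeff 0 p * MvPolynomial.coeff 0 p from
      funext fun x => by rw [hconst x]] at horth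
  rw [integral_const, measureReal_def, htop] at horth
  simp at horth

lemma integrable_cont {d : ℕ} (hfin : IsFiniteMeasure (sphMeasure d)) {g : Sph d → ℝ}
    (hg : Continuous g) : Integrable g (sphMeasure d) := by
  haveI := hfin
  have := hg.continuousOn.integrableOn_compact (μ := sphMeasure d) isCompact_univ
  simpa [MeasureTheory.integrableOn_univ] using this

end Stmt5Aux

/-- Theorem 3.2, stability: if the positive-weight quadrature rule
satisfies the Marcinkiewicz–Zygmund property with constant `η ∈ [0,1)` for degree `n`,
then for `f ∈ C(S^d)`: `‖U_n f‖_{L²} ≤ √(1+η)·(Σ_j w_j)^{1/2}·‖f‖_∞`. -/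
theorem statement5 (d : ℕ) (hd : 2 ≤ d) (S : SHSetup d)
    (f : Sph d → ℝ) (hf : Continuous f)
    (n m : ℕ) (w : Fin m → ℝ) (hw : ∀ j, 0 < w j) (pts : Fin m → Sph d)
    (η : ℝ) (hη0 : 0 ≤ η) (hη1 : η < 1) (hMZ : MZProperty S n m w pts η) :
    l2Norm d (hyper S n m w pts f) ≤
      Real.sqrt (1 + η) * Real.sqrt (∑ j, w j) * supNorm d f := by
  classical
  haveI hfin : IsFiniteMeasure (sphMeasure d) := Stmt5Aux.fin_meas hd S
  set c : (ℓ : ℕ) → Fin (Zdim d ℓ) → ℝ :=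
    fun ℓ k => ∑ j, w j * f (pts j) * S.Y ℓ k (pts j) with hc
  set U := hyper S n m w pts f with hUdef
  set I : Finset ((ℓ : ℕ) × Fin (Zdim d ℓ)) :=
    (Finset.range (n + 1)).sigma fun ℓ => (Finset.univ : Finset (Fin (Zdim d ℓ))) with hI
  have hUx : ∀ x, U x = ∑ i ∈ I, c i.1 i.2 * S.Y i.1 i.2 x := by
    intro x
    rw [hUdef]
    show (∑ ℓ ∈ Finset.range (n + 1), ∑ k, c ℓ k * S.Y ℓ k x) = _
    rw [hI, Finset.sum_sigma]
  -- orthonormality over the sigma index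
  have horth : ∀ i i' : (ℓ : ℕ) × Fin (Zdim d ℓ),
      (∫ x, S.Y i.1 i.2 x * S.Y i'.1 i'.2 x ∂(sphMeasure d)) = if i = i' then 1 else 0 := by
    rintro ⟨ℓ, k⟩ ⟨ℓ', k'⟩
    rw [S.orthonormal]
    congr 1
    simp only [eq_iff_iff]
    constructor
    · rintro ⟨rfl, h⟩
      rw [Fin.ext h]
    · intro hh
      obtain ⟨rfl, h2⟩ := Sigma.mk.inj_iff.mp hh
      exact ⟨rfl, congrArg Fin.val (eq_of_heq h2)⟩
  -- L² norm squared of U equals sum of squared coefficients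
  have hint : Integrable (fun x => U x ^ 2) (sphMeasure d) :=
    Stmt5Aux.integrable_cont hfin (by
      have hcU : Continuous U := by
        rw [hUdef]
        unfold hyper
        exact continuous_finset_sum _ fun ℓ _ => continuous_finset_sum _ fun k _ =>
          (continuous_const.mul (Stmt5Aux.cont_Y S ℓ k))
      exact hcU.pow 2)
  have hNsq : l2NormSq d U = ∑ i ∈ I, c i.1 i.2 ^ 2 := by
    unfold l2NormSq
    have expand : ∀ x : Sph d, U x ^ 2 =
        ∑ i ∈ I, ∑ i' ∈ I, (c i.1 i.2 * c i'.1 i'.2) * (S.Y i.1 i.2 x * S.Y i'.1 i'.2 x) := by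
      intro x
      rw [hUx, sq, Finset.sum_mul_sum]
      exact Finset.sum_congr rfl fun i _ => Finset.sum_congr rfl fun i' _ => by ring
    calc (∫ x, U x ^ 2 ∂sphMeasure d)
        = ∑ i ∈ I, ∑ i' ∈ I, (c i.1 i.2 * c i'.1 i'.2) *
            ∫ x, S.Y i.1 i.2 x * S.Y i'.1 i'.2 x ∂(sphMeasure d) := by
          rw [show (fun x : Sph d => U x ^ 2) = fun x =>
              ∑ i ∈ I, ∑ i' ∈ I, (c i.1 i.2 * c i'.1 i'.2) * (S.Y i.1 i.2 x * S.Y i'.1 i'.2 x)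
              from funext expand]
          rw [integral_finset_sum]
          · refine Finset.sum_congr rfl fun i _ => ?_
            rw [integral_finset_sum]
            · exact Finset.sum_congr rfl fun i' _ => integral_const_mul _ _
            · intro i' _
              exact (Stmt5Aux.integrable_cont hfin
                (((Stmt5Aux.cont_Y S _ _).mul (Stmt5Aux.cont_Y S _ _)))).const_mul _
          · intro i _
            exact integrable_finset_sum _ fun i' _ =>
              (Stmt5Aux.integrable_cont hfin
                (((Stmt5Aux.cont_Y S _ _).mul (Stmt5Aux.cont_Y S _ _)))).const_mul _
      _ = ∑ i ∈ I, ∑ i' ∈ I, (if i = i' then c i.1 i.2 * c i'.1 i'.2 else 0) := by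
          refine Finset.sum_congr rfl fun i _ => Finset.sum_congr rfl fun i' _ => ?_
          rw [horth i i', mul_ite, mul_one, mul_zero]
      _ = ∑ i ∈ I, c i.1 i.2 ^ 2 := by
          refine Finset.sum_congr rfl fun i hi => ?_
          rw [Finset.sum_ite_eq I i fun i' => c i.1 i.2 * c i'.1 i'.2, if_pos hi, sq]
  -- discrete identity
  have hdisc : ∑ j, w j * (f (pts j) * U (pts j)) = ∑ i ∈ I, c i.1 i.2 ^ 2 := by
    have step : ∀ j, w j * (f (pts j) * U (pts j)) =
        ∑ i ∈ I, c i.1 i.2 * (w j * f (pts j) * S.Y i.1 i.2 (pts j)) := by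
      intro j
      rw [hUx, Finset.mul_sum, Finset.mul_sum]
      exact Finset.sum_congr rfl fun i _ => by ring
    simp only [step]
    rw [Finset.sum_comm]
    refine Finset.sum_congr rfl fun i _ => ?_
    rw [← Finset.mul_sum, sq]
  have hsumSq_nonneg : (0 : ℝ) ≤ ∑ i ∈ I, c i.1 i.2 ^ 2 :=
    Finset.sum_nonneg fun i _ => sq_nonneg _
  -- U ∈ P_n
  have hin : inPn S n U := ⟨c, rfl⟩
  have hMZU := hMZ U hin
  have hl2 : (∫ x, U x ^ 2 ∂(sphMeasure d)) = l2NormSq d U := rfl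
  have hMZ2 : ∑ j, w j * U (pts j) ^ 2 ≤ (1 + η) * l2NormSq d U := by
    have h2 := (abs_le.mp hMZU).2
    rw [hl2] at h2
    nlinarith [hNsq ▸ hsumSq_nonneg]
  -- sup norm bound
  haveI hne : Nonempty (Sph d) := (NormedSpace.sphere_nonempty.mpr zero_le_one).to_subtype
  have hbdd : BddAbove (Set.range fun x : Sph d => |f x|) :=
    (isCompact_range hf.abs).bddAbove
  have hfE : ∀ x, |f x| ≤ supNorm d f := fun x => le_ciSup hbdd x
  have hE0 : 0 ≤ supNorm d f := le_trans (abs_nonneg _) (hfE (Classical.arbitrary _))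
  -- main chain
  set N := l2Norm d U with hN
  have hN0 : 0 ≤ N := Real.sqrt_nonneg _
  have hNsq' : N ^ 2 = l2NormSq d U := by
    rw [hN]
    unfold l2Norm
    rw [Real.sq_sqrt]
    rw [show l2NormSq d U = ∑ i ∈ I, c i.1 i.2 ^ 2 from hNsq]
    exact hsumSq_nonneg
  have hw0 : (0:ℝ) ≤ ∑ j, w j := Finset.sum_nonneg fun j _ => (hw j).le
  -- Cauchy–Schwarz
  have hCS : ∑ j, w j * |U (pts j)| ≤
      Real.sqrt (∑ j, w j) * Real.sqrt (∑ j, w j * U (pts j) ^ 2) := by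
    have h1 : (∑ j, w j * |U (pts j)|) ^ 2 ≤
        (∑ j, w j) * ∑ j, w j * U (pts j) ^ 2 := by
      have := Finset.sum_mul_sq_le_sq_mul_sq Finset.univ
        (fun j => Real.sqrt (w j)) (fun j => Real.sqrt (w j) * |U (pts j)|)
      have e1 : ∀ j : Fin m, Real.sqrt (w j) * (Real.sqrt (w j) * |U (pts j)|)
          = w j * |U (pts j)| := by
        intro j
        rw [← mul_assoc, Real.mul_self_sqrt (hw j).le]
      have e2 : ∀ j : Fin m, Real.sqrt (w j) ^ 2 = w j := fun j => Real.sq_sqrt (hw j).le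
      have e3 : ∀ j : Fin m, (Real.sqrt (w j) * |U (pts j)|) ^ 2 = w j * U (pts j) ^ 2 := by
        intro j
        rw [mul_pow, Real.sq_sqrt (hw j).le, sq_abs]
      simp only [e1, e2, e3] at this
      exact this
    have h2 : 0 ≤ ∑ j, w j * |U (pts j)| :=
      Finset.sum_nonneg fun j _ => mul_nonneg (hw j).le (abs_nonneg _)
    calc ∑ j, w j * |U (pts j)|
        = Real.sqrt ((∑ j, w j * |U (pts j)|) ^ 2) := (Real.sqrt_sq h2).symm
      _ ≤ Real.sqrt ((∑ j, w j) * ∑ j, w j * U (pts j) ^ 2) := Real.sqrt_le_sqrt h1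
      _ = Real.sqrt (∑ j, w j) * Real.sqrt (∑ j, w j * U (pts j) ^ 2) :=
          Real.sqrt_mul hw0 _
  have hWU0 : (0:ℝ) ≤ ∑ j, w j * U (pts j) ^ 2 :=
    Finset.sum_nonneg fun j _ => mul_nonneg (hw j).le (sq_nonneg _)
  have key : N ^ 2 ≤ supNorm d f * (Real.sqrt (∑ j, w j) *
      (Real.sqrt (1 + η) * N)) := by
    have c1 : N ^ 2 = ∑ j, w j * (f (pts j) * U (pts j)) := by
      rw [hNsq', hNsq, hdisc]
    have c2 : ∑ j, w j * (f (pts j) * U (pts j)) ≤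
        supNorm d f * ∑ j, w j * |U (pts j)| := by
      rw [Finset.mul_sum]
      refine Finset.sum_le_sum fun j _ => ?_
      have : f (pts j) * U (pts j) ≤ supNorm d f * |U (pts j)| := by
        calc f (pts j) * U (pts j) ≤ |f (pts j) * U (pts j)| := le_abs_self _
          _ = |f (pts j)| * |U (pts j)| := abs_mul _ _
          _ ≤ supNorm d f * |U (pts j)| :=
              mul_le_mul_of_nonneg_right (hfE _) (abs_nonneg _)
      calc w j * (f (pts j) * U (pts j)) ≤ w j * (supNorm d f * |U (pts j)|) :=
            mul_le_mul_of_nonneg_left this (hw j).le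
        _ = supNorm d f * (w j * |U (pts j)|) := by ring
    have c3 : Real.sqrt (∑ j, w j * U (pts j) ^ 2) ≤ Real.sqrt (1 + η) * N := by
      calc Real.sqrt (∑ j, w j * U (pts j) ^ 2)
          ≤ Real.sqrt ((1 + η) * l2NormSq d U) := Real.sqrt_le_sqrt hMZ2
        _ = Real.sqrt (1 + η) * Real.sqrt (l2NormSq d U) :=
            Real.sqrt_mul (by linarith) _
        _ = Real.sqrt (1 + η) * N := rfl
    calc N ^ 2 = ∑ j, w j * (f (pts j) * U (pts j)) := c1
      _ ≤ supNorm d f * ∑ j, w j * |U (pts j)| := c2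
      _ ≤ supNorm d f * (Real.sqrt (∑ j, w j) *
            Real.sqrt (∑ j, w j * U (pts j) ^ 2)) :=
          mul_le_mul_of_nonneg_left hCS hE0
      _ ≤ supNorm d f * (Real.sqrt (∑ j, w j) * (Real.sqrt (1 + η) * N)) := by
          refine mul_le_mul_of_nonneg_left ?_ hE0
          exact mul_le_mul_of_nonneg_left c3 (Real.sqrt_nonneg _)
  -- conclude
  rcases eq_or_lt_of_le hN0 with h0 | hpos
  · rw [← h0]
    positivity
  · have : N * N ≤ (Real.sqrt (1 + η) * Real.sqrt (∑ j, w j) * supNorm d f) * N := by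
      nlinarith [key]
    exact le_of_mul_le_mul_right this hpos

end
end
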